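/- Let φ₂ be a complex polynomial of degree 3, φ₁ a non-constant entire function, α, β ∈ ℝ⁺ \ {1}, and Θₙ(x) = α^{φ₁(x)} (dⁿ/dxⁿ)(β^{−φ₂(x)}). Then y = Θₙ satisfies the third-order linear ODE: y‴ + [ (log β) φ₂′ − 3(log α) φ₁′ ] y″ + [ (n+2)(log β) φ₂″ − 3(log α) φ₁″ − 2(log α)(log β) φ₁′ φ₂′ + 3(log α)² (φ₁′)² ] y′ + [ −(log α)³ (φ₁′)³ + (log α)²(log β) φ₂′ (φ₁′)² + 3(log α)² φ₁′ φ₁″ − (log α) φ₁‴ − (log α)(log β) φ₁″ φ₂′ − (n+2)(log α)(log β) φ₂″ φ₁′ + ½(n+1)(n+2)(log β) φ₂‴ ] y = 0. -/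

import Mathlib

open Complex Polynomial
open scoped ContDiff

private lemma iter_hasDerivAt {F : ℂ → ℂ} (hF : Differentiable ℂ F) (k : ℕ) (y : ℂ) :
    HasDerivAt (iteratedDeriv k F) (iteratedDeriv (k + 1) F y) y := by
  have h1 : Differentiable ℂ (iteratedDeriv k F) := by
    rw [iteratedDeriv_eq_iterate]
    exact ((hF.contDiff : ContDiff ℂ ∞ F).iterate_deriv k).differentiable (by simp)
  rw [iteratedDeriv_succ]
  exact (h1 y).hasDerivAt

private lemma iter_poly (P : Polynomial ℂ) (φ₂ : ℂ → ℂ) (hφ₂ : ∀ z, φ₂ z = P.eval z) :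
    ∀ k, iteratedDeriv k φ₂ = fun y => (Polynomial.derivative^[k] P).eval y
  | 0 => by simpa [iteratedDeriv_zero] using funext hφ₂
  | (k + 1) => by
    rw [iteratedDeriv_succ, iter_poly P φ₂ hφ₂ k]
    funext y
    rw [Polynomial.deriv, Function.iterate_succ_apply']

private lemma aux_key (M : ℂ) (P : Polynomial ℂ) (hP : P.degree = 3)
    (φ₂ : ℂ → ℂ) (hφ₂ : ∀ z, φ₂ z = P.eval z)
    (f : ℂ → ℂ) (hf : ∀ z, f z = Complex.exp (-(φ₂ z) * M)) :
    ∀ (m : ℕ) (y : ℂ),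
      iteratedDeriv (m + 3) f y =
        -(M * (deriv φ₂ y * iteratedDeriv (m + 2) f y
          + ((m : ℂ) + 2) * iteratedDeriv 2 φ₂ y * iteratedDeriv (m + 1) f y
          + (((m : ℂ) + 1) * ((m : ℂ) + 2) / 2) * iteratedDeriv 3 φ₂ y * iteratedDeriv m f y)) := by
  have hφ₂fun : φ₂ = fun z => P.eval z := funext hφ₂
  have hφ₂d : Differentiable ℂ φ₂ := by rw [hφ₂fun]; exact P.differentiable
  have hfd : Differentiable ℂ f := by
    rw [funext hf]; exact ((hφ₂d.neg).mul_const M).cexp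
  have hgD : ∀ k y, HasDerivAt (iteratedDeriv k f) (iteratedDeriv (k + 1) f y) y :=
    iter_hasDerivAt hfd
  have hG0 : ∀ y, HasDerivAt (iteratedDeriv 0 f) (iteratedDeriv 1 f y) y := fun y => hgD 0 y
  have hG1 : ∀ y, HasDerivAt (iteratedDeriv 1 f) (iteratedDeriv 2 f y) y := fun y => hgD 1 y
  have hG2 : ∀ y, HasDerivAt (iteratedDeriv 2 f) (iteratedDeriv 3 f y) y := fun y => hgD 2 y
  have hQ1 : ∀ y, HasDerivAt (deriv φ₂) (iteratedDeriv 2 φ₂ y) y := by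
    intro y
    have h := iter_hasDerivAt hφ₂d 1 y
    rwa [iteratedDeriv_one] at h
  have hQ2 : ∀ y, HasDerivAt (iteratedDeriv 2 φ₂) (iteratedDeriv 3 φ₂ y) y :=
    fun y => iter_hasDerivAt hφ₂d 2 y
  have h40 : (Polynomial.derivative^[4] P) = 0 :=
    Polynomial.iterate_derivative_eq_zero
      (by rw [Polynomial.natDegree_eq_of_degree_eq_some hP]; norm_num)
  have hQ3 : ∀ y, HasDerivAt (iteratedDeriv 3 φ₂) 0 y := by
    intro y
    have h : HasDerivAt (iteratedDeriv 3 φ₂) (iteratedDeriv 4 φ₂ y) y := iter_hasDerivAt hφ₂d 3 y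
    have e : iteratedDeriv 4 φ₂ y = 0 := by
      rw [iter_poly P φ₂ hφ₂ 4]; simp [h40]
    rwa [e] at h
  have hg1 : ∀ y, iteratedDeriv 1 f y = -(M * deriv φ₂ y) * iteratedDeriv 0 f y := by
    intro y
    have hD : HasDerivAt f (Complex.exp (-(φ₂ y) * M) * (-(deriv φ₂ y) * M)) y := by
      rw [funext hf]
      exact (((hφ₂d y).hasDerivAt.neg.mul_const M).cexp)
    rw [iteratedDeriv_one, iteratedDeriv_zero, hD.deriv, hf y]
    ring
  have hg2 : ∀ y, iteratedDeriv 2 f y =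
      -(M * (deriv φ₂ y * iteratedDeriv 1 f y + iteratedDeriv 2 φ₂ y * iteratedDeriv 0 f y)) := by
    intro y
    have e1 : iteratedDeriv 1 f = fun z => -(M * deriv φ₂ z) * iteratedDeriv 0 f z := funext hg1
    have hA : deriv (iteratedDeriv 1 f) y = iteratedDeriv 2 f y := (hG1 y).deriv
    have h2 : deriv (fun z => -(M * deriv φ₂ z) * iteratedDeriv 0 f z) y = _ :=
      ((((hQ1 y).const_mul M).neg).mul (hG0 y)).deriv
    rw [← e1] at h2
    rw [← hA, h2]
    simp only [Pi.mul_apply, Pi.add_apply, Pi.neg_apply]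
    ring
  have hg3 : ∀ y, iteratedDeriv 3 f y =
      -(M * (deriv φ₂ y * iteratedDeriv 2 f y + 2 * iteratedDeriv 2 φ₂ y * iteratedDeriv 1 f y
        + iteratedDeriv 3 φ₂ y * iteratedDeriv 0 f y)) := by
    intro y
    have e2 : iteratedDeriv 2 f = fun z =>
        -(M * (deriv φ₂ z * iteratedDeriv 1 f z + iteratedDeriv 2 φ₂ z * iteratedDeriv 0 f z)) :=
      funext hg2
    have hA : deriv (iteratedDeriv 2 f) y = iteratedDeriv 3 f y := (hG2 y).deriv
    have h3 : deriv (fun z =>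
        -(M * (deriv φ₂ z * iteratedDeriv 1 f z + iteratedDeriv 2 φ₂ z * iteratedDeriv 0 f z))) y
        = _ :=
      (((((hQ1 y).mul (hG1 y)).add ((hQ2 y).mul (hG0 y))).const_mul M).neg).deriv
    rw [← e2] at h3
    rw [← hA, h3]
    ring
  intro m
  induction m with
  | zero =>
    intro y
    simp only [Nat.zero_add, Nat.cast_zero]
    linear_combination hg3 y
  | succ m ih =>
    intro y
    show iteratedDeriv (m + 4) f y =
      -(M * (deriv φ₂ y * iteratedDeriv (m + 3) f y
        + (((m + 1 : ℕ) : ℂ) + 2) * iteratedDeriv 2 φ₂ y * iteratedDeriv (m + 2) f y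
        + ((((m + 1 : ℕ) : ℂ) + 1) * (((m + 1 : ℕ) : ℂ) + 2) / 2) * iteratedDeriv 3 φ₂ y *
            iteratedDeriv (m + 1) f y))
    have hgA : ∀ y, HasDerivAt (iteratedDeriv m f) (iteratedDeriv (m + 1) f y) y := hgD m
    have hgB : ∀ y, HasDerivAt (iteratedDeriv (m + 1) f) (iteratedDeriv (m + 2) f y) y :=
      fun y => hgD (m + 1) y
    have hgC : ∀ y, HasDerivAt (iteratedDeriv (m + 2) f) (iteratedDeriv (m + 3) f y) y :=
      fun y => hgD (m + 2) y
    have e : iteratedDeriv (m + 3) f = fun z =>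
        -(M * (deriv φ₂ z * iteratedDeriv (m + 2) f z
          + ((m : ℂ) + 2) * iteratedDeriv 2 φ₂ z * iteratedDeriv (m + 1) f z
          + (((m : ℂ) + 1) * ((m : ℂ) + 2) / 2) * iteratedDeriv 3 φ₂ z * iteratedDeriv m f z)) :=
      funext ih
    have hA : deriv (iteratedDeriv (m + 3) f) y = iteratedDeriv (m + 4) f y := (hgD (m + 3) y).deriv
    have hder : deriv (fun z =>
        -(M * (deriv φ₂ z * iteratedDeriv (m + 2) f z
          + ((m : ℂ) + 2) * iteratedDeriv 2 φ₂ z * iteratedDeriv (m + 1) f z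
          + (((m : ℂ) + 1) * ((m : ℂ) + 2) / 2) * iteratedDeriv 3 φ₂ z * iteratedDeriv m f z))) y
        = _ :=
      (((((hQ1 y).mul (hgC y)).add
          (((hQ2 y).const_mul ((m : ℂ) + 2)).mul (hgB y))).add
          (((hQ3 y).const_mul (((m : ℂ) + 1) * ((m : ℂ) + 2) / 2)).mul (hgA y))).const_mul
            M).neg.deriv
    rw [← e] at hder
    rw [← hA, hder]
    push_cast
    ring

theorem third_order_ode
    (α β : ℝ) (hα : 0 < α) (hα1 : α ≠ 1) (hβ : 0 < β) (hβ1 : β ≠ 1)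
    (φ₁ φ₂ : ℂ → ℂ) (hφ₁ : Differentiable ℂ φ₁)
    (hφ₁nc : ¬ ∃ c : ℂ, ∀ x, φ₁ x = c)
    (P : Polynomial ℂ) (hP : P.degree = 3) (hφ₂ : ∀ z, φ₂ z = P.eval z)
    (Θ : ℕ → ℂ → ℂ)
    (hΘ : ∀ n x, Θ n x = Complex.exp (φ₁ x * (Real.log α : ℂ)) *
      iteratedDeriv n (fun z => Complex.exp (-(φ₂ z) * (Real.log β : ℂ))) x)
    (n : ℕ) (x : ℂ) :
    iteratedDeriv 3 (Θ n) x
      + ((Real.log β : ℂ) * deriv φ₂ x - 3 * (Real.log α : ℂ) * deriv φ₁ x) *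
          iteratedDeriv 2 (Θ n) x
      + (((n : ℂ) + 2) * (Real.log β : ℂ) * iteratedDeriv 2 φ₂ x
          - 3 * (Real.log α : ℂ) * iteratedDeriv 2 φ₁ x
          - 2 * (Real.log α : ℂ) * (Real.log β : ℂ) * deriv φ₁ x * deriv φ₂ x
          + 3 * (Real.log α : ℂ) ^ 2 * (deriv φ₁ x) ^ 2) * deriv (Θ n) x
      + (-(Real.log α : ℂ) ^ 3 * (deriv φ₁ x) ^ 3
          + (Real.log α : ℂ) ^ 2 * (Real.log β : ℂ) * deriv φ₂ x * (deriv φ₁ x) ^ 2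
          + 3 * (Real.log α : ℂ) ^ 2 * deriv φ₁ x * iteratedDeriv 2 φ₁ x
          - (Real.log α : ℂ) * iteratedDeriv 3 φ₁ x
          - (Real.log α : ℂ) * (Real.log β : ℂ) * iteratedDeriv 2 φ₁ x * deriv φ₂ x
          - ((n : ℂ) + 2) * (Real.log α : ℂ) * (Real.log β : ℂ) *
              iteratedDeriv 2 φ₂ x * deriv φ₁ x
          + (1 / 2 : ℂ) * ((n : ℂ) + 1) * ((n : ℂ) + 2) * (Real.log β : ℂ) *
              iteratedDeriv 3 φ₂ x) * Θ n x = 0 := by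
  set l : ℂ := ((Real.log α : ℝ) : ℂ) with hl
  set m : ℂ := ((Real.log β : ℝ) : ℂ) with hm
  set f : ℂ → ℂ := fun z => Complex.exp (-(φ₂ z) * m) with hfdef
  have hf : ∀ z, f z = Complex.exp (-(φ₂ z) * m) := fun z => by rw [hfdef]
  have hφ₂fun : φ₂ = fun z => P.eval z := funext hφ₂
  have hφ₂d : Differentiable ℂ φ₂ := by rw [hφ₂fun]; exact P.differentiable
  have hfd : Differentiable ℂ f := by
    rw [hfdef]; exact ((hφ₂d.neg).mul_const m).cexp
  have hgD : ∀ k y, HasDerivAt (iteratedDeriv k f) (iteratedDeriv (k + 1) f y) y :=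
    iter_hasDerivAt hfd
  have hgA : ∀ y, HasDerivAt (iteratedDeriv n f) (iteratedDeriv (n + 1) f y) y := hgD n
  have hgB : ∀ y, HasDerivAt (iteratedDeriv (n + 1) f) (iteratedDeriv (n + 2) f y) y :=
    fun y => hgD (n + 1) y
  have hgC : ∀ y, HasDerivAt (iteratedDeriv (n + 2) f) (iteratedDeriv (n + 3) f y) y :=
    fun y => hgD (n + 2) y
  have hP1 : ∀ y, HasDerivAt φ₁ (deriv φ₁ y) y := fun y => (hφ₁ y).hasDerivAt
  have hP2 : ∀ y, HasDerivAt (deriv φ₁) (iteratedDeriv 2 φ₁ y) y := by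
    intro y
    have h := iter_hasDerivAt hφ₁ 1 y
    rwa [iteratedDeriv_one] at h
  have hP3 : ∀ y, HasDerivAt (iteratedDeriv 2 φ₁) (iteratedDeriv 3 φ₁ y) y :=
    fun y => iter_hasDerivAt hφ₁ 2 y
  have hu : ∀ y, HasDerivAt (fun z => Complex.exp (φ₁ z * l))
      (Complex.exp (φ₁ y * l) * (deriv φ₁ y * l)) y :=
    fun y => ((hP1 y).mul_const l).cexp
  have hΘn : Θ n = fun y => Complex.exp (φ₁ y * l) * iteratedDeriv n f y := funext (hΘ n)
  have hd1 : ∀ y, deriv (Θ n) y =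
      Complex.exp (φ₁ y * l) * (l * deriv φ₁ y * iteratedDeriv n f y + iteratedDeriv (n + 1) f y) := by
    intro y
    rw [hΘn]
    have h1 : deriv (fun y => Complex.exp (φ₁ y * l) * iteratedDeriv n f y) y = _ :=
      ((hu y).mul (hgA y)).deriv
    rw [h1]
    ring
  have hd2 : ∀ y, iteratedDeriv 2 (Θ n) y =
      Complex.exp (φ₁ y * l) * (l * l * deriv φ₁ y * deriv φ₁ y * iteratedDeriv n f y
        + l * iteratedDeriv 2 φ₁ y * iteratedDeriv n f y
        + 2 * l * deriv φ₁ y * iteratedDeriv (n + 1) f y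
        + iteratedDeriv (n + 2) f y) := by
    intro y
    have e1 : deriv (Θ n) = fun z =>
        Complex.exp (φ₁ z * l) * (l * deriv φ₁ z * iteratedDeriv n f z + iteratedDeriv (n + 1) f z) :=
      funext hd1
    rw [show (2 : ℕ) = 1 + 1 from rfl, iteratedDeriv_succ, iteratedDeriv_one, e1]
    have h2 : deriv (fun z =>
        Complex.exp (φ₁ z * l) * (l * deriv φ₁ z * iteratedDeriv n f z + iteratedDeriv (n + 1) f z)) y
        = _ :=
      ((hu y).mul ((((hP2 y).const_mul l).mul (hgA y)).add (hgB y))).deriv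
    rw [h2]
    simp only [Pi.mul_apply, Pi.add_apply, Pi.neg_apply]
    ring
  have hd3 : ∀ y, iteratedDeriv 3 (Θ n) y =
      Complex.exp (φ₁ y * l) * (l * l * l * deriv φ₁ y * deriv φ₁ y * deriv φ₁ y * iteratedDeriv n f y
        + 3 * l * l * deriv φ₁ y * iteratedDeriv 2 φ₁ y * iteratedDeriv n f y
        + l * iteratedDeriv 3 φ₁ y * iteratedDeriv n f y
        + 3 * l * l * deriv φ₁ y * deriv φ₁ y * iteratedDeriv (n + 1) f y
        + 3 * l * iteratedDeriv 2 φ₁ y * iteratedDeriv (n + 1) f y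
        + 3 * l * deriv φ₁ y * iteratedDeriv (n + 2) f y
        + iteratedDeriv (n + 3) f y) := by
    intro y
    have e2 : iteratedDeriv 2 (Θ n) = fun z =>
        Complex.exp (φ₁ z * l) * (l * l * deriv φ₁ z * deriv φ₁ z * iteratedDeriv n f z
          + l * iteratedDeriv 2 φ₁ z * iteratedDeriv n f z
          + 2 * l * deriv φ₁ z * iteratedDeriv (n + 1) f z
          + iteratedDeriv (n + 2) f z) := funext hd2
    rw [show (3 : ℕ) = 2 + 1 from rfl, iteratedDeriv_succ, e2]
    have h3 : deriv (fun z =>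
        Complex.exp (φ₁ z * l) * (l * l * deriv φ₁ z * deriv φ₁ z * iteratedDeriv n f z
          + l * iteratedDeriv 2 φ₁ z * iteratedDeriv n f z
          + 2 * l * deriv φ₁ z * iteratedDeriv (n + 1) f z
          + iteratedDeriv (n + 2) f z)) y = _ :=
      ((hu y).mul
        ((((((((hP2 y).const_mul (l * l)).mul (hP2 y)).mul (hgA y)).add
          (((hP3 y).const_mul l).mul (hgA y))).add
          (((hP2 y).const_mul (2 * l)).mul (hgB y))).add
          (hgC y)))).deriv
    rw [h3]
    simp only [Pi.mul_apply, Pi.add_apply, Pi.neg_apply]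
    ring
  have keyx := aux_key m P hP φ₂ hφ₂ f hf n x
  rw [hd3 x, hd2 x, hd1 x, hΘ n x]
  linear_combination (Complex.exp (φ₁ x * l)) * keyx
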